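/- arXiv:1805.10941 — 4 statements merged into one kernel-verified Lean document; each statement's English description precedes it below -/
import Mathlib

section
/- Let s, L be natural numbers with 0 < s < 2^L. For every y with 0 ≤ y < s, the number of integers x in [0, 2^L) satisfying (x * s) / 2^L = y and (x * s) mod 2^L ≥ 2^L mod s is exactly 2^L / s (floor division). -/
theorem fiber_count_accepted (s L y : ℕ) (hs : 0 < s) (hsL : s < 2 ^ L) (hy : y < s) :
    ((Finset.range (2 ^ L)).filter
        (fun x => (x * s) / 2 ^ L = y ∧ 2 ^ L % s ≤ (x * s) % 2 ^ L)).card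
      = 2 ^ L / s := by
  set N := 2 ^ L with hN
  have hN0 : 0 < N := Nat.lt_trans hs hsL
  set a := y * N + N % s with ha
  set k := N / s with hk
  set c := (a + s - 1) / s with hc
  have hmd : N % s + s * k = N := Nat.mod_add_div N s
  have hak : a + s * k = y * N + N := by omega
  have hca1 : a ≤ s * c := by
    have h1 : (a + s - 1) / s ≤ c := le_refl _
    rw [Nat.div_le_iff_le_mul_add_pred hs] at h1
    omega
  have hca2 : s * c ≤ a + s - 1 := by
    have h1 : c * s ≤ a + s - 1 := by rw [hc]; exact Nat.div_mul_le_self _ _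
    have h2 : c * s = s * c := Nat.mul_comm c s
    omega
  have hk1 : 1 ≤ k := (Nat.one_le_div_iff hs).mpr (le_of_lt hsL)
  have key : ∀ x : ℕ, (x < N ∧ ((x * s) / N = y ∧ N % s ≤ (x * s) % N)) ↔ (c ≤ x ∧ x < c + k) := by
    intro x
    have hdm := Nat.div_add_mod (x * s) N
    constructor
    · rintro ⟨hxN, hdiv, hmod⟩
      rw [hdiv] at hdm
      -- hdm : N * y + x*s % N = x*s
      have hmlt : (x * s) % N < N := Nat.mod_lt _ hN0
      have hcomm : N * y = y * N := Nat.mul_comm N y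
      have hax : a ≤ x * s := by omega
      have hxlt : x * s < a + s * k := by omega
      constructor
      · rw [hc, Nat.div_le_iff_le_mul_add_pred hs]
        have : s * x = x * s := Nat.mul_comm s x
        omega
      · have h1 : s * x < s * (c + k) := by
          have : s * (c + k) = s * c + s * k := Nat.mul_add s c k
          have h2 : s * x = x * s := Nat.mul_comm s x
          omega
        exact Nat.lt_of_mul_lt_mul_left h1
    · rintro ⟨hcx, hxck⟩
      have hax : a ≤ x * s := by
        have := Nat.mul_le_mul_left s hcx
        have : s * x = x * s := Nat.mul_comm s x
        omega
      have hxlt : x * s < a + s * k := by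
        have h1 : x + 1 ≤ c + k := hxck
        have := Nat.mul_le_mul_left s h1
        have h2 : s * (x + 1) = s * x + s := Nat.mul_add_one s x
        have h3 : s * (c + k) = s * c + s * k := Nat.mul_add s c k
        have h4 : s * x = x * s := Nat.mul_comm s x
        omega
      have hylo : y * N ≤ x * s := by omega
      have hyhi : x * s < (y + 1) * N := by
        have : (y + 1) * N = y * N + N := Nat.succ_mul y N
        omega
      have hdiv : (x * s) / N = y := Nat.div_eq_of_lt_le hylo hyhi
      refine ⟨?_, hdiv, ?_⟩
      · have h1 : x * s < s * N := by
          have h2 : (y + 1) * N ≤ s * N := Nat.mul_le_mul_right N hy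
          omega
        have : x * s = s * x := Nat.mul_comm x s
        exact Nat.lt_of_mul_lt_mul_left (a := s) (by omega)
      · rw [hdiv] at hdm
        have hcomm : N * y = y * N := Nat.mul_comm N y
        omega
  have hset : (Finset.range N).filter
        (fun x => (x * s) / N = y ∧ N % s ≤ (x * s) % N) = Finset.Ico c (c + k) := by
    ext x
    simp only [Finset.mem_filter, Finset.mem_range, Finset.mem_Ico]
    rw [← key x]
  rw [hset, Nat.card_Ico, Nat.add_sub_cancel_left]
end

section
/- Let s, L be natural numbers with 0 < s < 2^L, and let t = 2^L mod s. The number of integers x in [0, 2^L) with x ≥ t is 2^L - t, and s divides 2^L - t; moreover for each y in [0, s), the number of x in [t, 2^L) with x mod s = y is exactly 2^L / s (floor division). -/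
theorem openbsd_uniform (s L : ℕ) (hs : 0 < s) (hsL : s < 2 ^ L) :
    (Finset.Ico (2 ^ L % s) (2 ^ L)).card = 2 ^ L - 2 ^ L % s ∧
    s ∣ (2 ^ L - 2 ^ L % s) ∧
    ∀ y < s, ((Finset.Ico (2 ^ L % s) (2 ^ L)).filter (fun x => x % s = y)).card
      = 2 ^ L / s := by
  set N := 2 ^ L with hN
  set t := N % s with ht
  have hts : t < s := Nat.mod_lt _ hs
  have htN : t ≤ N := le_of_lt (lt_of_lt_of_le hts hsL.le)
  refine ⟨Nat.card_Ico _ _, ⟨N / s, by have := Nat.div_add_mod N s; omega⟩, ?_⟩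
  intro y hy
  have key : ∀ b : ℕ, ((Finset.range b).filter (fun x => x % s = y)).card
      = b / s + if y < b % s then 1 else 0 := by
    intro b
    have h := Nat.count_modEq_card b hs y
    rw [Nat.count_eq_card_filter_range] at h
    simpa [Nat.ModEq, Nat.mod_eq_of_lt hy] using h
  have hsplit : ((Finset.range t).filter (fun x => x % s = y)).card
      + ((Finset.Ico t N).filter (fun x => x % s = y)).card
      = ((Finset.range N).filter (fun x => x % s = y)).card := by
    rw [← Finset.card_union_of_disjoint, ← Finset.filter_union]
    simp only [Finset.range_eq_Ico]
    rw [Finset.Ico_union_Ico_eq_Ico (Nat.zero_le t) htN]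
    exact Finset.disjoint_filter_filter (by
      rw [Finset.range_eq_Ico]; exact Finset.Ico_disjoint_Ico_consecutive 0 t N)
  have h1 := key t
  have h2 := key N
  rw [Nat.mod_eq_of_lt hts, Nat.div_eq_of_lt hts] at h1
  rw [← ht] at h2
  omega
end

section
/- Let s, L be natural numbers with 0 < s ≤ 2^L. For x in [0, 2^L), letting r = x mod s, the condition x - r > 2^L - s holds if and only if x ≥ 2^L - (2^L mod s). -/
theorem java_rejection_test (s L x : ℕ) (hs : 0 < s) (hsL : s ≤ 2 ^ L) (hx : x < 2 ^ L) :
    x - x % s > 2 ^ L - s ↔ 2 ^ L - 2 ^ L % s ≤ x := by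
  have h1 := Nat.div_add_mod x s
  have h2 := Nat.div_add_mod (2 ^ L) s
  have hr : x % s < s := Nat.mod_lt _ hs
  have hR : 2 ^ L % s < s := Nat.mod_lt _ hs
  rcases le_or_gt (2 ^ L / s) (x / s) with h | h
  · have := Nat.mul_le_mul_left s h
    omega
  · have : s * (x / s + 1) ≤ s * (2 ^ L / s) := Nat.mul_le_mul_left s h
    rw [Nat.mul_add, Nat.mul_one] at this
    omega
end

section
/- Let s, L be natural numbers with 0 < s < 2^L. The map from accepted inputs A = {x ∈ [0, 2^L) : (x·s) mod 2^L ≥ 2^L mod s} to [0, s) given by x ↦ (x·s) / 2^L is surjective, and the cardinality of A equals s · (2^L / s) (floor division), i.e., 2^L - (2^L mod s). -/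
private lemma ceil_le_iff (s a x : ℕ) (hs : 0 < s) : (a + s - 1) / s ≤ x ↔ a ≤ s * x := by
  rw [Nat.div_le_iff_le_mul_add_pred hs]
  generalize s * x = m
  omega

private lemma ceil_lt_iff (s a x : ℕ) (hs : 0 < s) : x < (a + s - 1) / s ↔ s * x < a := by
  rw [← Nat.not_le, ceil_le_iff _ _ _ hs, Nat.not_le]

theorem accepted_surjective_and_count (s L : ℕ) (hs : 0 < s) (hsL : s < 2 ^ L) :
    (∀ y < s, ∃ x ∈ (Finset.range (2 ^ L)).filter
        (fun x => 2 ^ L % s ≤ (x * s) % 2 ^ L), (x * s) / 2 ^ L = y) ∧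
    ((Finset.range (2 ^ L)).filter (fun x => 2 ^ L % s ≤ (x * s) % 2 ^ L)).card
      = s * (2 ^ L / s) ∧
    s * (2 ^ L / s) = 2 ^ L - 2 ^ L % s := by
  set N := 2 ^ L with hN
  have hNpos : 0 < N := lt_trans hs hsL
  set A := (Finset.range N).filter (fun x => N % s ≤ (x * s) % N) with hA
  have fiber : ∀ y < s, A.filter (fun x => x * s / N = y)
      = Finset.Ico ((y * N + N % s + s - 1) / s) ((y * N + N % s + s - 1) / s + N / s) := by
    intro y hy
    have hhi : (y * N + N % s + s - 1) / s + N / s = ((y + 1) * N + s - 1) / s := by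
      have h1 : (y * N + N % s + s - 1) + s * (N / s) = (y + 1) * N + s - 1 := by
        have h2 : s * (N / s) + N % s = N := Nat.div_add_mod N s
        rw [add_mul, one_mul]
        generalize s * (N / s) = q at h2 ⊢
        generalize y * N = p
        omega
      rw [← h1, Nat.add_mul_div_left _ _ hs]
    ext x
    simp only [hA, Finset.mem_filter, Finset.mem_range, Finset.mem_Ico]
    rw [hhi, ceil_le_iff _ _ _ hs, ceil_lt_iff _ _ _ hs]
    constructor
    · rintro ⟨⟨hxN, hmod⟩, hdiv⟩
      have h1 : x * s % N + N * (x * s / N) = x * s := Nat.mod_add_div _ _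
      rw [hdiv] at h1
      have h2 : x * s % N < N := Nat.mod_lt _ hNpos
      constructor <;> nlinarith
    · rintro ⟨hlow, hhigh⟩
      have hxN : x < N := by
        by_contra h
        push_neg at h
        have : N * s ≤ x * s := Nat.mul_le_mul_right s h
        nlinarith
      have hdiv : x * s / N = y := by
        apply Nat.div_eq_of_lt_le
        · rw [mul_comm x s]; exact le_trans (Nat.le_add_right _ _) hlow
        · rw [mul_comm x s]; exact hhigh
      have h1 : x * s % N + N * (x * s / N) = x * s := Nat.mod_add_div _ _
      rw [hdiv] at h1
      refine ⟨⟨hxN, ?_⟩, hdiv⟩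
      nlinarith
  have hmaps : ∀ x ∈ A, x * s / N ∈ Finset.range s := by
    intro x hx
    simp only [hA, Finset.mem_filter, Finset.mem_range] at hx ⊢
    rw [Nat.div_lt_iff_lt_mul hNpos]
    nlinarith [hx.1]
  have hcard : A.card = s * (N / s) := by
    rw [Finset.card_eq_sum_card_fiberwise hmaps]
    have : ∀ y ∈ Finset.range s, (A.filter (fun x => x * s / N = y)).card = N / s := by
      intro y hy
      rw [fiber y (Finset.mem_range.mp hy), Nat.card_Ico, Nat.add_sub_cancel_left]
    rw [Finset.sum_congr rfl this, Finset.sum_const, Finset.card_range, smul_eq_mul]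
  refine ⟨?_, hcard, Nat.eq_sub_of_add_eq (Nat.div_add_mod N s)⟩
  intro y hy
  have hne : (A.filter (fun x => x * s / N = y)).Nonempty := by
    rw [fiber y hy]
    rw [Finset.nonempty_Ico]
    have : 0 < N / s := Nat.div_pos hsL.le hs
    omega
  obtain ⟨x, hx⟩ := hne
  simp only [Finset.mem_filter] at hx
  exact ⟨x, hx.1, hx.2⟩
end
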